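/- For a unital *-subalgebra A ⊆ B(H) decomposed via H = ⊕_i H_i^A ⊗ H_i^B with A = ⊕_i B(H_i^A) ⊗ 1_i, the map P_A(ρ) = Σ_i (1/dim H_i^B) Σ_{jk} (1_i ⊗ |j⟩_i⟨k|_i) ρ (1_i ⊗ |k⟩_i⟨j|_i) is a completely positive trace-nonincreasing map that is idempotent, self-adjoint for the Hilbert–Schmidt inner product, and has range exactly A. -/

import Mathlib

open Matrix Kronecker MeasureTheory
open scoped ComplexOrder

noncomputable section

/-- Square complex matrices of size `n`. -/
abbrev Mat (n : ℕ) := Matrix (Fin n) (Fin n) ℂ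

/-- Operator norm (spectral norm) of a square matrix. -/
noncomputable def opNorm {m : Type*} [Fintype m] [DecidableEq m]
    (A : Matrix m m ℂ) : ℝ :=
  ‖Matrix.toEuclideanCLM (𝕜 := ℂ) A‖

/-- Square root of a positive semidefinite matrix (the former `Matrix.PosSemidef.sqrt`). -/
noncomputable def psdSqrt {n : Type*} [Fintype n] [DecidableEq n] {𝕜 : Type*} [RCLike 𝕜]
    {A : Matrix n n 𝕜} (hA : A.PosSemidef) : Matrix n n 𝕜 :=
  (hA.1.eigenvectorUnitary : Matrix n n 𝕜) *
    diagonal (fun i => ((Real.sqrt (hA.1.eigenvalues i) : ℝ) : 𝕜)) *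
    (star (hA.1.eigenvectorUnitary : Matrix n n 𝕜))

/-- Trace norm of a square matrix. -/
noncomputable def traceNorm {m : Type*} [Fintype m] [DecidableEq m]
    (A : Matrix m m ℂ) : ℝ :=
  (psdSqrt (Matrix.posSemidef_conjTranspose_mul_self A)).trace.re

/-- Trivial extension `Φ ⊗ id` of a map on matrices, defined entrywise. -/
def extendId {a b : ℕ} (Φ : Mat a → Mat b) (m : ℕ)
    (M : Matrix (Fin a × Fin m) (Fin a × Fin m) ℂ) :
    Matrix (Fin b × Fin m) (Fin b × Fin m) ℂ :=
  Matrix.of fun r c => Φ (Matrix.of fun p q => M (p, r.2) (q, c.2)) r.1 c.1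

/-- Diamond norm of a (difference of) map(s) `Mat a → Mat b`, with ancilla of
dimension equal to the input dimension. -/
noncomputable def dnorm {a b : ℕ} (Φ : Mat a → Mat b) : ℝ :=
  ⨆ ρ : {ρ : Matrix (Fin a × Fin a) (Fin a × Fin a) ℂ // ρ.PosSemidef ∧ ρ.trace = 1},
    traceNorm (extendId Φ a ρ.1)

/-- A map is a quantum channel (CPTP) iff it admits a Kraus representation. -/
def IsCPTP {a b : ℕ} (Φ : Mat a → Mat b) : Prop :=
  ∃ (κ : ℕ) (K : Fin κ → Matrix (Fin b) (Fin a) ℂ),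
    (∀ ρ, Φ ρ = ∑ i, K i * ρ * (K i)ᴴ) ∧ (∑ i, (K i)ᴴ * K i = 1)

/-- `Nh` is a complementary channel of `N` (with environment of dimension `e`). -/
def IsComplementary {a b e : ℕ} (N : Mat a → Mat b) (Nh : Mat a → Mat e) : Prop :=
  ∃ K : Fin e → Matrix (Fin b) (Fin a) ℂ,
    (∀ ρ, N ρ = ∑ i, K i * ρ * (K i)ᴴ) ∧ (∑ i, (K i)ᴴ * K i = 1) ∧
    (∀ ρ, Nh ρ = Matrix.of fun i j => (K i * ρ * (K j)ᴴ).trace)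

/-- The commutant of a set of matrices. -/
def commutant {n : ℕ} (A : Set (Mat n)) : Set (Mat n) :=
  {X | ∀ a ∈ A, a * X = X * a}

/-- `P` is the Hilbert–Schmidt-orthogonal projection onto the set `S`. -/
def IsHSProjectionOnto {n : ℕ} (P : Mat n → Mat n) (S : Set (Mat n)) : Prop :=
  (∀ X, P X ∈ S) ∧ (∀ X ∈ S, P X = X) ∧
  (∀ X Y, ((P X)ᴴ * Y).trace = (Xᴴ * P Y).trace)

end

/-- explicit form of the HS projection onto a finite-dimensional
`*`-algebra `A = ⊕ᵢ B(Hᵢᴬ) ⊗ 1ᵢ` on `H = ⊕ᵢ Hᵢᴬ ⊗ Hᵢᴮ`. -/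
theorem stmt_9 {m : ℕ} (a b : Fin m → ℕ) (hb : ∀ i, 0 < b i)
    (T : ∀ i : Fin m, Fin (b i) → Fin (b i) →
      Matrix (Σ i : Fin m, Fin (a i) × Fin (b i)) (Σ i : Fin m, Fin (a i) × Fin (b i)) ℂ)
    (hT : ∀ i j k, T i j k = Matrix.of fun r c =>
      if ∃ p : Fin (a i), r = ⟨i, (p, j)⟩ ∧ c = ⟨i, (p, k)⟩ then 1 else 0)
    (P : Matrix (Σ i : Fin m, Fin (a i) × Fin (b i)) (Σ i : Fin m, Fin (a i) × Fin (b i)) ℂ →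
         Matrix (Σ i : Fin m, Fin (a i) × Fin (b i)) (Σ i : Fin m, Fin (a i) × Fin (b i)) ℂ)
    (hP : ∀ ρ, P ρ = ∑ i, ((b i : ℂ))⁻¹ • ∑ j, ∑ k, T i j k * ρ * (T i j k)ᴴ)
    (A : Set (Matrix (Σ i : Fin m, Fin (a i) × Fin (b i)) (Σ i : Fin m, Fin (a i) × Fin (b i)) ℂ))
    (hA : ∀ X, X ∈ A ↔ ∃ f : ∀ i, Matrix (Fin (a i)) (Fin (a i)) ℂ,
      (∀ (i : Fin m) (p p' : Fin (a i)) (q q' : Fin (b i)),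
        X ⟨i, (p, q)⟩ ⟨i, (p', q')⟩ = if q = q' then f i p p' else 0) ∧
      (∀ r c, r.1 ≠ c.1 → X r c = 0)) :
    (∃ (κ : ℕ) (K : Fin κ →
        Matrix (Σ i : Fin m, Fin (a i) × Fin (b i)) (Σ i : Fin m, Fin (a i) × Fin (b i)) ℂ),
      ∀ ρ, P ρ = ∑ i, K i * ρ * (K i)ᴴ) ∧
    (∀ ρ, ρ.PosSemidef → ((P ρ).trace).re ≤ (ρ.trace).re) ∧
    (∀ ρ, P (P ρ) = P ρ) ∧
    (∀ X Y, ((P X)ᴴ * Y).trace = (Xᴴ * P Y).trace) ∧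
    Set.range P = A := by
  classical
  have hbne : ∀ i, (b i : ℂ) ≠ 0 := fun i => Nat.cast_ne_zero.mpr (hb i).ne'
  have hTc : ∀ (i : Fin m) (j k : Fin (b i)), (T i j k)ᴴ = T i k j := by
    intro i j k
    ext r c
    simp only [hT, conjTranspose_apply, of_apply]
    rw [apply_ite star, star_one, star_zero]
    congr 1
    simp [and_comm]
  have hT0 : ∀ (i : Fin m) (j k : Fin (b i)) (r x : Σ i : Fin m, Fin (a i) × Fin (b i)),
      r.1 ≠ i → T i j k r x = 0 := by
    intro i j k r x h
    rw [hT]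
    simp only [of_apply, ite_eq_right_iff]
    rintro ⟨p, rfl, rfl⟩
    exact absurd rfl h
  have hrow : ∀ (ρ : Matrix (Σ i : Fin m, Fin (a i) × Fin (b i))
        (Σ i : Fin m, Fin (a i) × Fin (b i)) ℂ)
      (i : Fin m) (j k : Fin (b i)) (r c : Σ i : Fin m, Fin (a i) × Fin (b i)),
      r.1 ≠ i → (T i j k * ρ * (T i j k)ᴴ) r c = 0 := by
    intro ρ i j k r c h
    simp [mul_apply, hT0 i j k r _ h]
  have hcol : ∀ (ρ : Matrix (Σ i : Fin m, Fin (a i) × Fin (b i))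
        (Σ i : Fin m, Fin (a i) × Fin (b i)) ℂ)
      (i : Fin m) (j k : Fin (b i)) (r c : Σ i : Fin m, Fin (a i) × Fin (b i)),
      c.1 ≠ i → (T i j k * ρ * (T i j k)ᴴ) r c = 0 := by
    intro ρ i j k r c h
    simp [mul_apply, conjTranspose_apply, hT0 i j k c _ h]
  have hTd : ∀ (ρ : Matrix (Σ i : Fin m, Fin (a i) × Fin (b i))
        (Σ i : Fin m, Fin (a i) × Fin (b i)) ℂ)
      (i : Fin m) (j k : Fin (b i)) (p₁ p₂ : Fin (a i)) (q₁ q₂ : Fin (b i)),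
      (T i j k * ρ * (T i j k)ᴴ) ⟨i, (p₁, q₁)⟩ ⟨i, (p₂, q₂)⟩ =
        if q₁ = j ∧ q₂ = j then ρ ⟨i, (p₁, k)⟩ ⟨i, (p₂, k)⟩ else 0 := by
    intro ρ i j k p₁ p₂ q₁ q₂
    simp only [mul_apply, conjTranspose_apply, hT, of_apply]
    simp [ite_and, eq_comm, and_assoc, exists_eq_left', Finset.sum_ite_eq, Finset.sum_ite_eq']
    split_ifs <;> simp [mul_ite, Finset.sum_ite_eq']
  have keyoff : ∀ (ρ : Matrix (Σ i : Fin m, Fin (a i) × Fin (b i))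
        (Σ i : Fin m, Fin (a i) × Fin (b i)) ℂ)
      (r c : Σ i : Fin m, Fin (a i) × Fin (b i)), r.1 ≠ c.1 → P ρ r c = 0 := by
    intro ρ r c h
    rw [hP]
    simp only [Finset.sum_apply, Matrix.smul_apply, Matrix.sum_apply, smul_eq_mul]
    refine Finset.sum_eq_zero fun i _ => ?_
    rcases ne_or_eq r.1 i with hi | hi
    · rw [Finset.sum_eq_zero fun j _ =>
        Finset.sum_eq_zero fun k _ => hrow ρ i j k r c hi, mul_zero]
    · have hc : c.1 ≠ i := fun hc => h (hi.trans hc.symm)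
      rw [Finset.sum_eq_zero fun j _ =>
        Finset.sum_eq_zero fun k _ => hcol ρ i j k r c hc, mul_zero]
  have keydiag : ∀ (ρ : Matrix (Σ i : Fin m, Fin (a i) × Fin (b i))
        (Σ i : Fin m, Fin (a i) × Fin (b i)) ℂ)
      (i : Fin m) (p₁ p₂ : Fin (a i)) (q₁ q₂ : Fin (b i)),
      P ρ ⟨i, (p₁, q₁)⟩ ⟨i, (p₂, q₂)⟩ =
        if q₁ = q₂ then (b i : ℂ)⁻¹ * ∑ k, ρ ⟨i, (p₁, k)⟩ ⟨i, (p₂, k)⟩ else 0 := by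
    intro ρ i p₁ p₂ q₁ q₂
    rw [hP]
    simp only [Finset.sum_apply, Matrix.smul_apply, Matrix.sum_apply, smul_eq_mul]
    rw [Finset.sum_eq_single i (fun i' _ hi' => by
        rw [Finset.sum_eq_zero fun j _ => Finset.sum_eq_zero fun k _ =>
          hrow ρ i' j k _ _ hi'.symm, mul_zero])
      (fun h => absurd (Finset.mem_univ i) h)]
    simp only [hTd]
    rw [Finset.sum_comm]
    by_cases hq : q₁ = q₂
    · subst hq
      simp [Finset.mul_sum]
    · rw [if_neg hq, Finset.sum_eq_zero, mul_zero]
      intro y _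
      refine Finset.sum_eq_zero fun x _ => ?_
      rw [if_neg]
      rintro ⟨rfl, rfl⟩
      exact hq rfl
  have htr : ∀ (ρ : Matrix (Σ i : Fin m, Fin (a i) × Fin (b i))
        (Σ i : Fin m, Fin (a i) × Fin (b i)) ℂ), (P ρ).trace = ρ.trace := by
    intro ρ
    rw [Matrix.trace, Matrix.trace, ← Finset.univ_sigma_univ, Finset.sum_sigma, Finset.sum_sigma]
    refine Finset.sum_congr rfl fun i _ => ?_
    rw [Fintype.sum_prod_type, Fintype.sum_prod_type]
    refine Finset.sum_congr rfl fun p _ => ?_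
    simp only [Matrix.diag_apply, keydiag, if_pos rfl, if_true]
    rw [Finset.sum_const, Finset.card_univ, Fintype.card_fin, nsmul_eq_mul,
      ← mul_assoc, mul_inv_cancel₀ (hbne i), one_mul]
  refine ⟨?_, ?_, ?_, ?_, ?_⟩
  · -- Kraus representation
    set e := (Fintype.equivFin (Σ i : Fin m, Fin (b i) × Fin (b i))).symm with he
    refine ⟨Fintype.card (Σ i : Fin m, Fin (b i) × Fin (b i)),
      fun n => ((Real.sqrt (b (e n).1) : ℝ) : ℂ)⁻¹ • T (e n).1 (e n).2.1 (e n).2.2,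
      fun ρ => ?_⟩
    rw [hP]
    rw [Fintype.sum_equiv e
      (fun n => (((Real.sqrt (b (e n).1) : ℝ) : ℂ)⁻¹ • T (e n).1 (e n).2.1 (e n).2.2) * ρ *
        ((((Real.sqrt (b (e n).1) : ℝ) : ℂ)⁻¹ • T (e n).1 (e n).2.1 (e n).2.2))ᴴ)
      (fun x : (Σ i : Fin m, Fin (b i) × Fin (b i)) =>
        (((Real.sqrt (b x.1) : ℝ) : ℂ)⁻¹ • T x.1 x.2.1 x.2.2) * ρ *
          ((((Real.sqrt (b x.1) : ℝ) : ℂ)⁻¹ • T x.1 x.2.1 x.2.2))ᴴ)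
      (fun n => rfl)]
    rw [← Finset.univ_sigma_univ, Finset.sum_sigma]
    refine Finset.sum_congr rfl fun i _ => ?_
    rw [Fintype.sum_prod_type, Finset.smul_sum]
    refine Finset.sum_congr rfl fun j _ => ?_
    rw [Finset.smul_sum]
    refine Finset.sum_congr rfl fun k _ => ?_
    rw [conjTranspose_smul, smul_mul_assoc, smul_mul_assoc, mul_smul_comm, smul_smul]
    congr 1
    rw [star_inv₀]
    have hs : star ((Real.sqrt (b i) : ℝ) : ℂ) = ((Real.sqrt (b i) : ℝ) : ℂ) := by
      simp [Complex.star_def, Complex.conj_ofReal]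
    rw [hs, ← mul_inv, ← Complex.ofReal_mul, Real.mul_self_sqrt (Nat.cast_nonneg _)]
    norm_num
  · -- trace nonincreasing
    intro ρ _
    rw [htr ρ]
  · -- idempotent
    intro ρ
    ext r c
    rcases r with ⟨i₁, p₁, q₁⟩
    rcases c with ⟨i₂, p₂, q₂⟩
    rcases ne_or_eq i₁ i₂ with h | h
    · rw [keyoff _ _ _ h, keyoff _ _ _ h]
    · subst h
      rw [keydiag, keydiag]
      split_ifs with h
      · congr 1
        rw [Finset.sum_congr rfl fun k _ => by rw [keydiag, if_pos rfl],
          Finset.sum_const, Finset.card_univ, Fintype.card_fin, nsmul_eq_mul,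
          ← mul_assoc, mul_inv_cancel₀ (hbne i₁), one_mul]
      · rfl
  · -- self-adjoint
    intro X Y
    have key4 : ∀ (i : Fin m) (j k : Fin (b i)),
        ((T i j k * X * (T i j k)ᴴ)ᴴ * Y).trace =
          (Xᴴ * (T i k j * Y * (T i k j)ᴴ)).trace := by
      intro i j k
      have e1 : (T i j k * X * (T i j k)ᴴ)ᴴ * Y = T i j k * (Xᴴ * (T i k j * Y)) := by
        simp only [conjTranspose_mul, conjTranspose_conjTranspose, hTc, mul_assoc]
      have e2 : Xᴴ * (T i k j * Y * (T i k j)ᴴ) = Xᴴ * (T i k j * Y) * T i j k := by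
        rw [hTc]
        simp only [mul_assoc]
      rw [e1, e2, Matrix.trace_mul_comm]
    rw [hP X, hP Y, Matrix.conjTranspose_sum, Finset.sum_mul, Finset.mul_sum,
      Matrix.trace_sum, Matrix.trace_sum]
    refine Finset.sum_congr rfl fun i _ => ?_
    rw [conjTranspose_smul, Matrix.smul_mul, Matrix.mul_smul, Matrix.trace_smul,
      Matrix.trace_smul, Matrix.conjTranspose_sum, Finset.sum_mul, Finset.mul_sum,
      Matrix.trace_sum, Matrix.trace_sum]
    have hst : star ((b i : ℂ))⁻¹ = ((b i : ℂ))⁻¹ := by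
      rw [star_inv₀, star_natCast]
    rw [hst, smul_eq_mul, smul_eq_mul]
    congr 1
    have L : ∀ j, ((∑ k, T i j k * X * (T i j k)ᴴ)ᴴ * Y).trace
        = ∑ k, ((T i j k * X * (T i j k)ᴴ)ᴴ * Y).trace := fun j => by
      rw [Matrix.conjTranspose_sum, Finset.sum_mul, Matrix.trace_sum]
    have R : ∀ j, (Xᴴ * ∑ k, T i j k * Y * (T i j k)ᴴ).trace
        = ∑ k, (Xᴴ * (T i j k * Y * (T i j k)ᴴ)).trace := fun j => by
      rw [Finset.mul_sum, Matrix.trace_sum]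
    rw [Finset.sum_congr rfl fun j _ => L j, Finset.sum_congr rfl fun j _ => R j,
      Finset.sum_comm]
    exact Finset.sum_congr rfl fun k _ => Finset.sum_congr rfl fun j _ => key4 i j k
  · -- range
    ext X
    constructor
    · rintro ⟨ρ, rfl⟩
      rw [hA]
      refine ⟨fun i => Matrix.of fun p p' => (b i : ℂ)⁻¹ * ∑ k, ρ ⟨i, (p, k)⟩ ⟨i, (p', k)⟩,
        fun i p p' q q' => ?_, keyoff ρ⟩
      rw [keydiag]; rfl
    · intro hX
      obtain ⟨f, h1, h2⟩ := (hA X).mp hX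
      refine ⟨X, ?_⟩
      ext r c
      rcases r with ⟨i₁, p₁, q₁⟩
      rcases c with ⟨i₂, p₂, q₂⟩
      rcases ne_or_eq i₁ i₂ with h | h
      · rw [keyoff _ _ _ h, h2 _ _ h]
      · subst h
        rw [keydiag, h1 i₁ p₁ p₂ q₁ q₂]
        split_ifs with h
        · rw [Finset.sum_congr rfl fun k (_ : k ∈ Finset.univ) => by
              rw [h1 i₁ p₁ p₂ k k, if_pos rfl],
            Finset.sum_const, Finset.card_univ, Fintype.card_fin, nsmul_eq_mul,
            ← mul_assoc, inv_mul_cancel₀ (hbne i₁), one_mul]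
        · rfl
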